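/- Let S be a type, R a commutative ring, and q : S → R. For a finitely supported function D : S →₀ ℕ define r(D) = ∏_{x ∈ supp(D)} (1 − q(x)) and w(D) = ∏_{x ∈ supp(D)} q(x)^{D(x)}. Then for every D : S →₀ ℕ one has Σ_{(D₁,D₂) : D₁ + D₂ = D} r(D₁)·w(D₂) = 1 (the sum taken over the antidiagonal of D). (The convolution identity underlying formula (5.10) of the paper: β ∗ 𝔏₁ = q^{g−1}𝔏₀, i.e. convolving Schieder's r with 𝔏₁ gives 𝔏₀.) -/

import Mathlib

open Finset

lemma single_pt {R : Type*} [CommRing R] (u : R) (n : ℕ) :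
    ∑ p ∈ Finset.HasAntidiagonal.antidiagonal n, (if p.1 = 0 then 1 else (1 - u)) * u ^ p.2 = 1 := by
  induction n with
  | zero => simp
  | succ n ih =>
    rw [Finset.Nat.antidiagonal_succ', Finset.sum_cons, Finset.sum_map]
    simp only [Function.Embedding.coe_prodMap, Function.Embedding.refl_apply,
      Function.Embedding.coeFn_mk, Prod.map_fst, Prod.map_snd, Nat.succ_ne_zero, if_neg,
      Nat.succ_eq_add_one, pow_succ]
    have : ∑ p ∈ Finset.HasAntidiagonal.antidiagonal n,
        (if p.1 = 0 then (1:R) else (1 - u)) * (u ^ p.2 * u)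
        = (∑ p ∈ Finset.HasAntidiagonal.antidiagonal n, (if p.1 = 0 then 1 else (1 - u)) * u ^ p.2) * u := by
      rw [Finset.sum_mul]; exact Finset.sum_congr rfl fun p _ => by ring
    rw [this, ih]
    simp only [if_false]; ring

section
variable {S : Type*} [DecidableEq S] {R : Type*} [CommRing R]

lemma r_single_add (q : S → R) (a : S) (i : ℕ) (g : S →₀ ℕ) (hg : g a = 0) :
    (∏ x ∈ (Finsupp.single a i + g).support, (1 - q x))
      = (if i = 0 then 1 else (1 - q a)) * ∏ x ∈ g.support, (1 - q x) := by
  rcases eq_or_ne i 0 with rfl | hi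
  · simp
  · have hs : (Finsupp.single a i).support = {a} := Finsupp.support_single_ne_zero a hi
    have hd : Disjoint (Finsupp.single a i).support g.support := by
      rw [hs]
      simp [Finsupp.mem_support_iff, hg]
    rw [Finsupp.support_add_eq hd, Finset.prod_union hd, hs, if_neg hi, Finset.prod_singleton]

lemma w_single_add (q : S → R) (a : S) (j : ℕ) (g : S →₀ ℕ) (hg : g a = 0) :
    (∏ x ∈ (Finsupp.single a j + g).support, q x ^ (Finsupp.single a j + g) x)
      = q a ^ j * ∏ x ∈ g.support, q x ^ g x := by
  rcases eq_or_ne j 0 with rfl | hj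
  · simp
  · have hs : (Finsupp.single a j).support = {a} := Finsupp.support_single_ne_zero a hj
    have hd : Disjoint (Finsupp.single a j).support g.support := by
      rw [hs]; simp [Finsupp.mem_support_iff, hg]
    rw [Finsupp.support_add_eq hd, Finset.prod_union hd, hs, Finset.prod_singleton]
    congr 1
    · simp [hg]
    · refine Finset.prod_congr rfl fun x hx => ?_
      have hxa : x ≠ a := fun h => by
        rw [h] at hx; exact (Finsupp.mem_support_iff.mp hx) hg
      simp [Finsupp.single_apply, if_neg (Ne.symm hxa)]

end

section
variable {S : Type*} [DecidableEq S] {R : Type*} [CommRing R]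

lemma reindex (F : (S →₀ ℕ) × (S →₀ ℕ) → R) (a : S) (n : ℕ) (f : S →₀ ℕ) (hf : f a = 0) :
    ∑ P ∈ Finset.HasAntidiagonal.antidiagonal (Finsupp.single a n + f), F P
      = ∑ Q ∈ (Finset.HasAntidiagonal.antidiagonal n) ×ˢ (Finset.HasAntidiagonal.antidiagonal f),
          F (Finsupp.single a Q.1.1 + Q.2.1, Finsupp.single a Q.1.2 + Q.2.2) := by
  refine Finset.sum_nbij'
    (fun P => ((P.1 a, P.2 a), (Finsupp.erase a P.1, Finsupp.erase a P.2)))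
    (fun Q => (Finsupp.single a Q.1.1 + Q.2.1, Finsupp.single a Q.1.2 + Q.2.2))
    ?_ ?_ ?_ ?_ ?_
  · rintro ⟨P1, P2⟩ hP
    rw [Finset.HasAntidiagonal.mem_antidiagonal] at hP
    have hPa : P1 a + P2 a = n := by
      have := DFunLike.congr_fun hP a
      simpa [hf] using this
    have herase : Finsupp.erase a P1 + Finsupp.erase a P2 = f := by
      rw [← Finsupp.erase_add, hP, Finsupp.erase_add, Finsupp.erase_single,
        zero_add, Finsupp.erase_of_notMem_support]
      simp [Finsupp.mem_support_iff, hf]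
    simp [Finset.HasAntidiagonal.mem_antidiagonal, hPa, herase]
  · rintro ⟨⟨i, j⟩, ⟨g1, g2⟩⟩ hQ
    simp only [Finset.mem_product, Finset.HasAntidiagonal.mem_antidiagonal] at hQ
    rw [Finset.HasAntidiagonal.mem_antidiagonal]
    have : Finsupp.single a i + g1 + (Finsupp.single a j + g2)
        = Finsupp.single a (i + j) + (g1 + g2) := by
      rw [Finsupp.single_add]; abel
    rw [this, hQ.1, hQ.2]
  · rintro ⟨P1, P2⟩ hP
    simp only [Prod.mk.injEq]
    exact ⟨Finsupp.single_add_erase a P1, Finsupp.single_add_erase a P2⟩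
  · rintro ⟨⟨i, j⟩, ⟨g1, g2⟩⟩ hQ
    simp only [Finset.mem_product, Finset.HasAntidiagonal.mem_antidiagonal] at hQ
    have hg1 : g1 a = 0 := by
      have := DFunLike.congr_fun hQ.2 a
      simp only [Finsupp.add_apply, hf] at this
      omega
    have hg2 : g2 a = 0 := by
      have := DFunLike.congr_fun hQ.2 a
      simp only [Finsupp.add_apply, hf] at this
      omega
    have e1 : Finsupp.erase a (Finsupp.single a i + g1) = g1 := by
      rw [Finsupp.erase_add, Finsupp.erase_single, zero_add,
        Finsupp.erase_of_notMem_support]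
      simp [Finsupp.mem_support_iff, hg1]
    have e2 : Finsupp.erase a (Finsupp.single a j + g2) = g2 := by
      rw [Finsupp.erase_add, Finsupp.erase_single, zero_add,
        Finsupp.erase_of_notMem_support]
      simp [Finsupp.mem_support_iff, hg2]
    simp [e1, e2, hg1, hg2]
  · rintro ⟨P1, P2⟩ hP
    congr 1
    simp only [Prod.mk.injEq]
    exact ⟨(Finsupp.single_add_erase a P1).symm, (Finsupp.single_add_erase a P2).symm⟩

end


/-- The convolution identity underlying formula (5.10) of the paper
(`β ∗ 𝔏₁ = q^{g-1} 𝔏₀`): convolving Schieder's function `r` with `𝔏₁` gives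
`𝔏₀`.  For `D : S →₀ ℕ` set `r(D) = ∏_{x ∈ supp D} (1 - q x)` and
`w(D) = ∏_{x ∈ supp D} q x ^ D x`; then
`Σ_{D₁ + D₂ = D} r(D₁) w(D₂) = 1` for every `D`. -/
theorem stmt_17 {S : Type*} [DecidableEq S] {R : Type*} [CommRing R] (q : S → R)
    (D : S →₀ ℕ) :
    ∑ P ∈ Finset.HasAntidiagonal.antidiagonal D,
        (∏ x ∈ P.1.support, (1 - q x)) *
          (∏ x ∈ P.2.support, q x ^ P.2 x)
      = 1 := by
  induction D using Finsupp.induction with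
  | zero => simp [Finsupp.antidiagonal_zero]
  | single_add a n f ha hn ih =>
    have hf : f a = 0 := Finsupp.notMem_support_iff.mp ha
    rw [reindex _ a n f hf]
    have key : ∀ Q ∈ (Finset.HasAntidiagonal.antidiagonal n) ×ˢ (Finset.HasAntidiagonal.antidiagonal f),
        (∏ x ∈ (Finsupp.single a Q.1.1 + Q.2.1).support, (1 - q x)) *
          (∏ x ∈ (Finsupp.single a Q.1.2 + Q.2.2).support,
            q x ^ (Finsupp.single a Q.1.2 + Q.2.2) x)
        = ((if Q.1.1 = 0 then 1 else (1 - q a)) * q a ^ Q.1.2) *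
            ((∏ x ∈ Q.2.1.support, (1 - q x)) * ∏ x ∈ Q.2.2.support, q x ^ Q.2.2 x) := by
      rintro ⟨⟨i, j⟩, ⟨g1, g2⟩⟩ hQ
      simp only [Finset.mem_product, Finset.HasAntidiagonal.mem_antidiagonal] at hQ
      have hg1 : g1 a = 0 := by
        have := DFunLike.congr_fun hQ.2 a
        simp only [Finsupp.add_apply, hf] at this; omega
      have hg2 : g2 a = 0 := by
        have := DFunLike.congr_fun hQ.2 a
        simp only [Finsupp.add_apply, hf] at this; omega
      rw [r_single_add q a i g1 hg1, w_single_add q a j g2 hg2]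
      ring
    rw [Finset.sum_congr rfl key, Finset.sum_product]
    have := Finset.sum_mul_sum (Finset.HasAntidiagonal.antidiagonal n) (Finset.HasAntidiagonal.antidiagonal f)
      (fun p => (if p.1 = 0 then (1:R) else 1 - q a) * q a ^ p.2)
      (fun P => (∏ x ∈ P.1.support, (1 - q x)) * ∏ x ∈ P.2.support, q x ^ P.2 x)
    rw [← this, single_pt, ih, one_mul]
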